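/- arXiv:2206.11241 — 2 statements merged into one kernel-verified Lean document; each statement's English description precedes it below -/
import Mathlib

section
/- Let (X_j)_{j=0}^{L} be a sequence of Bochner-integrable random vectors in ℝ^p with X_0 = 0 that is a very-weak martingale, i.e. E[ X_j | σ(X_{j−1}) ] = X_{j−1} almost surely for every j ∈ {1,…,L}. Suppose ‖X_j − X_{j−1}‖₂ ≤ 1 almost surely for every j ∈ {1,…,L}. Then for every j ∈ {1,…,L} and every a > 0, P( ‖X_j‖₂ ≥ a ) < 2·exp( 1 − (a−1)²/(2j) ). -/
open MeasureTheory Real Nat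
open scoped RealInnerProductSpace

lemma hasSum_cosh_sqrt (t : ℝ) {v : ℝ} (hv : 0 ≤ v) :
    HasSum (fun n : ℕ => (t ^ 2 * v) ^ n / ↑(2 * n)!) (Real.cosh (t * Real.sqrt v)) := by
  have h := Real.hasSum_cosh (t * Real.sqrt v)
  convert h using 2 with n
  rw [pow_mul, mul_pow t, sq_sqrt hv, mul_pow]

lemma cosh_sqrt_chord (t : ℝ) {α β va vb : ℝ} (hα : 0 ≤ α) (hβ : 0 ≤ β)
    (hαβ : α + β = 1) (hva : 0 ≤ va) (hvb : 0 ≤ vb) :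
    Real.cosh (t * Real.sqrt (α * va + β * vb)) ≤
      α * Real.cosh (t * Real.sqrt va) + β * Real.cosh (t * Real.sqrt vb) := by
  have hv : (0:ℝ) ≤ α * va + β * vb := by positivity
  refine hasSum_le (fun n => ?_) (hasSum_cosh_sqrt t hv)
    (((hasSum_cosh_sqrt t hva).mul_left α).add ((hasSum_cosh_sqrt t hvb).mul_left β))
  have hA : (0:ℝ) ≤ t ^ 2 * va := by positivity
  have hB : (0:ℝ) ≤ t ^ 2 * vb := by positivity
  have hconv := (convexOn_pow (𝕜 := ℝ) n).2 (Set.mem_Ici.2 hA) (Set.mem_Ici.2 hB) hα hβ hαβ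
  simp only [smul_eq_mul] at hconv
  have h2 : t ^ 2 * (α * va + β * vb) = α * (t ^ 2 * va) + β * (t ^ 2 * vb) := by ring
  rw [h2]
  have hfac : (0:ℝ) < ↑(2 * n)! := by positivity
  have heq : α * ((t ^ 2 * va) ^ n / ↑(2 * n)!) + β * ((t ^ 2 * vb) ^ n / ↑(2 * n)!)
      = (α * (t ^ 2 * va) ^ n + β * (t ^ 2 * vb) ^ n) / ↑(2 * n)! := by ring
  rw [heq]
  gcongr

noncomputable def Gmap (t C : ℝ) {p : ℕ} (x : EuclideanSpace ℝ (Fin p)) : EuclideanSpace ℝ (Fin p) :=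
  if ‖x‖ = 0 ∨ C < ‖x‖ then 0 else
    ((Real.cosh (t * (‖x‖ + 1)) - Real.cosh (t * (‖x‖ - 1))) / (2 * ‖x‖)) • x

lemma Gmap_norm_le (t C : ℝ) (hC : 0 ≤ C) {p : ℕ} (x : EuclideanSpace ℝ (Fin p)) :
    ‖Gmap t C x‖ ≤ Real.cosh (t * (C + 1)) := by
  rw [Gmap]
  split_ifs with h
  · simpa using (Real.cosh_pos (x := t * (C+1))).le
  · push_neg at h
    obtain ⟨h0, hle⟩ := h
    have hu : 0 < ‖x‖ := (norm_nonneg x).lt_of_ne' h0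
    rw [norm_smul]
    have h1 : Real.cosh (t * (‖x‖ + 1)) ≤ Real.cosh (t * (C + 1)) := by
      rw [Real.cosh_le_cosh, abs_mul, abs_mul]
      have : |‖x‖ + 1| ≤ |C + 1| := by
        rw [abs_of_nonneg (by positivity), abs_of_nonneg (by positivity)]; linarith
      exact mul_le_mul_of_nonneg_left this (abs_nonneg t)
    have h2 : Real.cosh (t * (‖x‖ - 1)) ≤ Real.cosh (t * (C + 1)) := by
      rw [Real.cosh_le_cosh, abs_mul, abs_mul]
      have : |‖x‖ - 1| ≤ |C + 1| := by
        rw [abs_of_nonneg (by positivity : (0:ℝ) ≤ C + 1), abs_le]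
        constructor <;> linarith
      exact mul_le_mul_of_nonneg_left this (abs_nonneg t)
    have hA := Real.cosh_pos (x := t * (‖x‖ + 1))
    have hB := Real.cosh_pos (x := t * (‖x‖ - 1))
    rw [Real.norm_eq_abs, abs_div, abs_of_nonneg (by positivity : (0:ℝ) ≤ 2 * ‖x‖)]
    rw [div_mul_eq_mul_div, div_le_iff₀ (by positivity)]
    calc |Real.cosh (t * (‖x‖ + 1)) - Real.cosh (t * (‖x‖ - 1))| * ‖x‖
        ≤ (2 * Real.cosh (t * (C+1))) * ‖x‖ := by
          apply mul_le_mul_of_nonneg_right _ (norm_nonneg x)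
          rw [abs_le]; constructor <;> nlinarith
      _ = Real.cosh (t * (C + 1)) * (2 * ‖x‖) := by ring

lemma Gmap_measurable (t C : ℝ) {p : ℕ} : Measurable (Gmap t C (p := p)) := by
  unfold Gmap
  have hcont1 : Measurable fun x : EuclideanSpace ℝ (Fin p) =>
      Real.cosh (t * (‖x‖ + 1)) :=
    (Real.continuous_cosh.comp (continuous_const.mul (continuous_norm.add continuous_const))).measurable
  have hcont2 : Measurable fun x : EuclideanSpace ℝ (Fin p) =>
      Real.cosh (t * (‖x‖ - 1)) :=
    (Real.continuous_cosh.comp (continuous_const.mul (continuous_norm.sub continuous_const))).measurable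
  apply Measurable.ite
  · apply MeasurableSet.union
    · exact measurable_norm (measurableSet_singleton 0)
    · exact measurable_norm measurableSet_Ioi
  · exact measurable_const
  · exact (((hcont1.sub hcont2)).div (measurable_const.mul measurable_norm)).smul measurable_id

lemma pointwise_ineq {p : ℕ} (t C : ℝ) (ht : 0 ≤ t) (x y : EuclideanSpace ℝ (Fin p))
    (hy : ‖y‖ ≤ 1) (hx : ‖x‖ ≤ C) :
    Real.cosh (t * ‖x + y‖) ≤ Real.cosh t * Real.cosh (t * ‖x‖) + ⟪Gmap t C x, y⟫ := by
  by_cases hu : ‖x‖ = 0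
  · have hx0 : x = 0 := norm_eq_zero.mp hu
    subst hx0
    simp only [Gmap, norm_zero]
    rw [if_pos (Or.inl trivial)]
    simp only [inner_zero_left, add_zero, zero_add, mul_zero, Real.cosh_zero, mul_one]
    rw [Real.cosh_le_cosh, abs_mul, abs_of_nonneg ht, abs_of_nonneg (norm_nonneg y)]
    exact mul_le_of_le_one_right ht hy
  · have hu0 : 0 < ‖x‖ := (norm_nonneg x).lt_of_ne' hu
    set u := ‖x‖ with hudef
    set s := ⟪x, y⟫ with hsdef
    have hs : |s| ≤ u := by
      calc |s| ≤ ‖x‖ * ‖y‖ := abs_real_inner_le_norm x y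
        _ ≤ u * 1 := by apply mul_le_mul_of_nonneg_left hy hu0.le
        _ = u := mul_one u
    have hs1 : -u ≤ s := neg_le_of_abs_le hs
    have hs2 : s ≤ u := le_of_abs_le hs
    have hune : u ≠ 0 := ne_of_gt hu0
    set α := (u - s) / (2 * u) with hα_def
    set β := (u + s) / (2 * u) with hβ_def
    have hα : 0 ≤ α := by apply div_nonneg <;> linarith
    have hβ : 0 ≤ β := by apply div_nonneg <;> linarith
    have hαβ : α + β = 1 := by rw [hα_def, hβ_def]; field_simp; ring
    have hw : α * (u - 1) ^ 2 + β * (u + 1) ^ 2 = u ^ 2 + 2 * s + 1 := by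
      rw [hα_def, hβ_def]; field_simp; ring
    -- step 1: ‖x + y‖ ≤ sqrt (u^2 + 2s + 1)
    have hnsq : ‖x + y‖ ^ 2 ≤ u ^ 2 + 2 * s + 1 := by
      have := norm_add_sq_real x y
      nlinarith [norm_nonneg y, norm_nonneg (x + y)]
    have hw0 : 0 ≤ u ^ 2 + 2 * s + 1 := le_trans (by positivity) hnsq
    have hstep1 : Real.cosh (t * ‖x + y‖) ≤ Real.cosh (t * Real.sqrt (u ^ 2 + 2 * s + 1)) := by
      rw [Real.cosh_le_cosh, abs_mul, abs_mul, abs_of_nonneg (norm_nonneg _),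
        abs_of_nonneg (Real.sqrt_nonneg _)]
      apply mul_le_mul_of_nonneg_left _ (abs_nonneg t)
      rw [← Real.sqrt_sq (norm_nonneg (x + y))]
      exact Real.sqrt_le_sqrt hnsq
    -- step 2: chord
    have hstep2 : Real.cosh (t * Real.sqrt (u ^ 2 + 2 * s + 1)) ≤
        α * Real.cosh (t * (u - 1)) + β * Real.cosh (t * (u + 1)) := by
      have h := cosh_sqrt_chord t hα hβ hαβ (sq_nonneg (u - 1)) (sq_nonneg (u + 1))
      rw [hw, Real.sqrt_sq_eq_abs, Real.sqrt_sq (by positivity : (0:ℝ) ≤ u + 1)] at h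
      rwa [show t * |u - 1| = |t * (u - 1)| by
          rw [abs_mul, abs_of_nonneg ht], Real.cosh_abs] at h
    -- step 3: algebra
    have hAB : Real.cosh (t * (u - 1)) + Real.cosh (t * (u + 1)) =
        2 * (Real.cosh t * Real.cosh (t * u)) := by
      rw [show t * (u + 1) = t * u + t by ring, show t * (u - 1) = t * u - t by ring,
        Real.cosh_add, Real.cosh_sub]
      ring
    have hinner : ⟪Gmap t C x, y⟫ =
        ((Real.cosh (t * (u + 1)) - Real.cosh (t * (u - 1))) / (2 * u)) * s := by
      rw [Gmap, if_neg (by push_neg; exact ⟨hu, not_lt.mp (by simpa using not_lt.mpr hx)⟩)]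
      rw [real_inner_smul_left]
    have halg : α * Real.cosh (t * (u - 1)) + β * Real.cosh (t * (u + 1)) =
        Real.cosh t * Real.cosh (t * u) + ⟪Gmap t C x, y⟫ := by
      rw [hinner, hα_def, hβ_def]
      field_simp
      rw [show u * t = t * u by ring]
      linear_combination u * hAB
    linarith [hstep1, hstep2]

lemma condexp_comp_clm {α : Type*} {m m0 : MeasurableSpace α} (hm : m ≤ m0)
    {μ : Measure α} [IsFiniteMeasure μ]
    {E F : Type*} [NormedAddCommGroup E] [NormedSpace ℝ E] [CompleteSpace E]
    [NormedAddCommGroup F] [NormedSpace ℝ F] [CompleteSpace F]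
    (T : E →L[ℝ] F) {f : α → E} (hf : Integrable f μ) :
    μ[fun ω => T (f ω)|m] =ᵐ[μ] fun ω => T ((μ[f|m]) ω) := by
  haveI : SigmaFinite (μ.trim hm) := by infer_instance
  refine (ae_eq_condExp_of_forall_setIntegral_eq hm (T.integrable_comp hf)
    (fun s _ _ => (T.integrable_comp integrable_condExp).integrableOn)
    (fun s hs hμs => ?_) ?_).symm
  · rw [T.integral_comp_comm (integrable_condExp.restrict),
      T.integral_comp_comm (hf.restrict), setIntegral_condExp hm hf hs]
  · exact StronglyMeasurable.aestronglyMeasurable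
      (T.continuous.comp_stronglyMeasurable stronglyMeasurable_condExp)

lemma coord_abs_le_norm {p : ℕ} (x : EuclideanSpace ℝ (Fin p)) (i : Fin p) : |x i| ≤ ‖x‖ := by
  rw [EuclideanSpace.norm_eq]
  rw [← Real.sqrt_sq_eq_abs]
  apply Real.sqrt_le_sqrt
  have := Finset.single_le_sum (f := fun j => ‖x j‖ ^ 2) (fun j _ => by positivity)
    (Finset.mem_univ i)
  simpa [Real.norm_eq_abs, sq_abs] using this

/-- The key orthogonality: `∫ ⟪G(W), V⟫ = ∫ ⟪G(W), W⟫` when `E[V | σ(W)] = W`. -/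
lemma integral_inner_eq {Ω : Type*} {mΩ : MeasurableSpace Ω} (μ : Measure Ω)
    [IsProbabilityMeasure μ] {p : ℕ}
    (W V : Ω → EuclideanSpace ℝ (Fin p)) (hW : Measurable W)
    (hVint : Integrable V μ) (hWint : Integrable W μ)
    (hcond : μ[V|MeasurableSpace.comap W inferInstance] =ᵐ[μ] W)
    (G : EuclideanSpace ℝ (Fin p) → EuclideanSpace ℝ (Fin p)) (hG : Measurable G)
    (C : ℝ) (hGb : ∀ x, ‖G x‖ ≤ C) :
    ∫ ω, ⟪G (W ω), V ω⟫ ∂μ = ∫ ω, ⟪G (W ω), W ω⟫ ∂μ := by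
  have hm : MeasurableSpace.comap W inferInstance ≤ mΩ := hW.comap_le
  haveI : SigmaFinite (μ.trim hm) := by infer_instance
  have hWm : Measurable[MeasurableSpace.comap W inferInstance] W :=
    Measurable.of_comap_le le_rfl
  -- coordinate functions
  set Z : Ω → EuclideanSpace ℝ (Fin p) := fun ω => G (W ω) with hZ_def
  have hZmeas : Measurable Z := hG.comp hW
  have hZb : ∀ ω (i : Fin p), |Z ω i| ≤ C :=
    fun ω i => (coord_abs_le_norm _ i).trans (hGb _)
  have hZi_sm : ∀ i : Fin p,
      StronglyMeasurable[MeasurableSpace.comap W inferInstance] (fun ω => Z ω i) :=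
    fun i => (show Measurable[MeasurableSpace.comap W inferInstance] fun ω => Z ω i from
      (measurable_pi_apply i).comp ((WithLp.measurable_ofLp 2 _).comp (hG.comp hWm))).stronglyMeasurable
  have hVi_int : ∀ i : Fin p, Integrable (fun ω => V ω i) μ :=
    fun i => (EuclideanSpace.proj i (𝕜 := ℝ)).integrable_comp hVint
  have hWi_int : ∀ i : Fin p, Integrable (fun ω => W ω i) μ :=
    fun i => (EuclideanSpace.proj i (𝕜 := ℝ)).integrable_comp hWint
  have hZVi_int : ∀ i : Fin p, Integrable (fun ω => Z ω i * V ω i) μ := by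
    intro i
    exact (hVi_int i).bdd_mul (c := C)
      ((show Measurable fun ω => Z ω i from
        (measurable_pi_apply i).comp ((WithLp.measurable_ofLp 2 _).comp hZmeas)).aestronglyMeasurable)
      (Filter.Eventually.of_forall fun ω => by simpa [Real.norm_eq_abs] using hZb ω i)
  have hZWi_int : ∀ i : Fin p, Integrable (fun ω => Z ω i * W ω i) μ := by
    intro i
    exact (hWi_int i).bdd_mul (c := C)
      ((show Measurable fun ω => Z ω i from
        (measurable_pi_apply i).comp ((WithLp.measurable_ofLp 2 _).comp hZmeas)).aestronglyMeasurable)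
      (Filter.Eventually.of_forall fun ω => by simpa [Real.norm_eq_abs] using hZb ω i)
  -- coordinatewise conditional expectation
  have hVi_cond : ∀ i : Fin p, μ[fun ω => V ω i|MeasurableSpace.comap W inferInstance] =ᵐ[μ] fun ω => W ω i := by
    intro i
    have h1 := condexp_comp_clm hm (EuclideanSpace.proj i (𝕜 := ℝ)) hVint
    refine h1.trans ?_
    filter_upwards [hcond] with ω hω
    simp [hω]
  -- per-coordinate integral identity
  have hcoord : ∀ i : Fin p,
      ∫ ω, Z ω i * V ω i ∂μ = ∫ ω, Z ω i * W ω i ∂μ := by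
    intro i
    have hmul := condExp_mul_of_stronglyMeasurable_left (μ := μ) (m := MeasurableSpace.comap W inferInstance) (hZi_sm i)
      (hZVi_int i) (hVi_int i)
    calc ∫ ω, Z ω i * V ω i ∂μ
        = ∫ ω, (μ[(fun ω => Z ω i) * (fun ω => V ω i)|MeasurableSpace.comap W inferInstance]) ω ∂μ :=
          (integral_condExp hm).symm
      _ = ∫ ω, Z ω i * (μ[fun ω => V ω i|MeasurableSpace.comap W inferInstance]) ω ∂μ := by
          refine integral_congr_ae ?_
          filter_upwards [hmul] with ω hω
          simpa using hω
      _ = ∫ ω, Z ω i * W ω i ∂μ := by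
          refine integral_congr_ae ?_
          filter_upwards [hVi_cond i] with ω hω
          rw [hω]
  -- sum over coordinates
  have hinner1 : ∀ ω, ⟪Z ω, V ω⟫ = ∑ i : Fin p, Z ω i * V ω i := by
    intro ω
    simp [PiLp.inner_apply, RCLike.inner_apply, conj_trivial]
    exact Finset.sum_congr rfl (fun _ _ => mul_comm _ _)
  have hinner2 : ∀ ω, ⟪Z ω, W ω⟫ = ∑ i : Fin p, Z ω i * W ω i := by
    intro ω
    simp [PiLp.inner_apply, RCLike.inner_apply, conj_trivial]
    exact Finset.sum_congr rfl (fun _ _ => mul_comm _ _)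
  calc ∫ ω, ⟪G (W ω), V ω⟫ ∂μ = ∫ ω, ∑ i : Fin p, Z ω i * V ω i ∂μ := by
        exact integral_congr_ae (Filter.Eventually.of_forall hinner1)
    _ = ∑ i : Fin p, ∫ ω, Z ω i * V ω i ∂μ :=
        integral_finset_sum _ (fun i _ => hZVi_int i)
    _ = ∑ i : Fin p, ∫ ω, Z ω i * W ω i ∂μ := by
        exact Finset.sum_congr rfl (fun i _ => hcoord i)
    _ = ∫ ω, ∑ i : Fin p, Z ω i * W ω i ∂μ :=
        (integral_finset_sum _ (fun i _ => hZWi_int i)).symm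
    _ = ∫ ω, ⟪G (W ω), W ω⟫ ∂μ := by
        exact integral_congr_ae (Filter.Eventually.of_forall (fun ω => (hinner2 ω).symm))

/-- Azuma–Hoeffding-type tail bound of Hayes for very-weak
martingales: let `(X_j)_{j=0}^{L}` be Bochner-integrable random vectors in `ℝ^p`
with `X_0 = 0` forming a very-weak martingale, i.e.
`E[X_j | σ(X_{j−1})] = X_{j−1}` a.s. for every `j ∈ {1,…,L}`, and suppose
`‖X_j − X_{j−1}‖₂ ≤ 1` almost surely for every `j ∈ {1,…,L}`. Then for every
`j ∈ {1,…,L}` and every `a > 0`, `P(‖X_j‖₂ ≥ a) < 2 exp(1 − (a−1)²/(2j))`. -/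
theorem veryWeakMartingale_tail_bound
    {Ω : Type*} {mΩ : MeasurableSpace Ω} (μ : Measure Ω) [IsProbabilityMeasure μ]
    {p L : ℕ} (X : ℕ → Ω → EuclideanSpace ℝ (Fin p))
    (hmeas : ∀ j, Measurable (X j))
    (hint : ∀ j, Integrable (X j) μ)
    (hX0 : X 0 = 0)
    (hmart : ∀ j, 1 ≤ j → j ≤ L →
      μ[X j|MeasurableSpace.comap (X (j - 1)) inferInstance] =ᵐ[μ] X (j - 1))
    (hdiff : ∀ j, 1 ≤ j → j ≤ L → ∀ᵐ ω ∂μ, ‖X j ω - X (j - 1) ω‖ ≤ 1) :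
    ∀ j, 1 ≤ j → j ≤ L → ∀ a : ℝ, 0 < a →
      (μ {ω | a ≤ ‖X j ω‖}).toReal < 2 * Real.exp (1 - (a - 1) ^ 2 / (2 * j)) := by
  -- a.e. bound on the norms
  have hbdd : ∀ k, k ≤ L → ∀ᵐ ω ∂μ, ‖X k ω‖ ≤ (k : ℝ) := by
    intro k
    induction k with
    | zero => intro _; filter_upwards with ω; simp [hX0]
    | succ n ih =>
      intro hnL
      have h1 := ih (Nat.le_of_succ_le hnL)
      have h2 := hdiff (n + 1) (Nat.le_add_left 1 n) hnL
      simp only [Nat.add_sub_cancel] at h2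
      filter_upwards [h1, h2] with ω hω1 hω2
      have : ‖X (n+1) ω‖ ≤ ‖X n ω‖ + ‖X (n+1) ω - X n ω‖ := by
        have := norm_add_le (X n ω) (X (n+1) ω - X n ω)
        simpa using this
      push_cast
      linarith
  intro j hj1 hjL a ha
  have hJ0 : (0:ℝ) < (j:ℝ) := by exact_mod_cast hj1
  set t : ℝ := a / (j:ℝ) with ht_def
  have ht0 : 0 < t := div_pos ha hJ0
  have ht : 0 ≤ t := ht0.le
  -- integrability of cosh (t * ‖X k‖)
  have hcosh_meas : ∀ k, Measurable fun ω => Real.cosh (t * ‖X k ω‖) := fun k =>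
    Real.continuous_cosh.measurable.comp (((hmeas k).norm).const_mul t)
  have hcosh_int : ∀ k, k ≤ L → Integrable (fun ω => Real.cosh (t * ‖X k ω‖)) μ := by
    intro k hk
    refine ⟨(hcosh_meas k).aestronglyMeasurable, ?_⟩
    apply HasFiniteIntegral.of_bounded (C := Real.cosh (t * (k:ℝ)))
    filter_upwards [hbdd k hk] with ω hω
    rw [Real.norm_eq_abs, abs_of_pos (Real.cosh_pos _), Real.cosh_le_cosh, abs_mul, abs_mul,
      abs_of_nonneg ht, abs_of_nonneg (norm_nonneg _), abs_of_nonneg (Nat.cast_nonneg k)]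
    exact mul_le_mul_of_nonneg_left hω ht
  -- the main moment bound by induction
  have hmain : ∀ k, k ≤ L → ∫ ω, Real.cosh (t * ‖X k ω‖) ∂μ ≤ (Real.cosh t) ^ k := by
    intro k
    induction k with
    | zero => intro _; simp [hX0]
    | succ n ih =>
      intro hnL
      have hnL' : n ≤ L := Nat.le_of_succ_le hnL
      have hIH := ih hnL'
      set G : EuclideanSpace ℝ (Fin p) → EuclideanSpace ℝ (Fin p) := Gmap t (L:ℝ) with hG_def
      have hGmeas : Measurable G := Gmap_measurable t (L:ℝ)
      have hGb : ∀ x, ‖G x‖ ≤ Real.cosh (t * ((L:ℝ) + 1)) :=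
        fun x => Gmap_norm_le t (L:ℝ) (Nat.cast_nonneg L) x
      have hd := hdiff (n + 1) (Nat.le_add_left 1 n) hnL
      simp only [Nat.add_sub_cancel] at hd
      have hm := hmart (n + 1) (Nat.le_add_left 1 n) hnL
      simp only [Nat.add_sub_cancel] at hm
      -- pointwise a.e. inequality
      have hptwise : ∀ᵐ ω ∂μ, Real.cosh (t * ‖X (n+1) ω‖) ≤
          Real.cosh t * Real.cosh (t * ‖X n ω‖) + ⟪G (X n ω), X (n+1) ω - X n ω⟫ := by
        filter_upwards [hbdd n hnL', hd] with ω hω1 hω2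
        have hxL : ‖X n ω‖ ≤ (L:ℝ) := hω1.trans (by exact_mod_cast Nat.cast_le.mpr hnL')
        have := pointwise_ineq t (L:ℝ) ht (X n ω) (X (n+1) ω - X n ω) hω2 hxL
        rwa [add_sub_cancel] at this
      -- integrability of the inner term
      have hinner_meas : ∀ (V : Ω → EuclideanSpace ℝ (Fin p)), Measurable V →
          Measurable fun ω => ⟪G (X n ω), V ω⟫ :=
        fun V hV => (hGmeas.comp (hmeas n)).inner hV
      have hinner_int : ∀ (V : Ω → EuclideanSpace ℝ (Fin p)) (c : ℝ), Measurable V →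
          (∀ᵐ ω ∂μ, ‖V ω‖ ≤ c) → Integrable (fun ω => ⟪G (X n ω), V ω⟫) μ := by
        intro V c hV hVb
        refine ⟨(hinner_meas V hV).aestronglyMeasurable, ?_⟩
        apply HasFiniteIntegral.of_bounded (C := Real.cosh (t * ((L:ℝ) + 1)) * c)
        filter_upwards [hVb] with ω hω
        rw [Real.norm_eq_abs]
        calc |⟪G (X n ω), V ω⟫| ≤ ‖G (X n ω)‖ * ‖V ω‖ := abs_real_inner_le_norm _ _
          _ ≤ Real.cosh (t * ((L:ℝ) + 1)) * c := by
              apply mul_le_mul (hGb _) hω (norm_nonneg _) (Real.cosh_pos _).le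
      have hint1 : Integrable (fun ω => ⟪G (X n ω), X (n+1) ω⟫) μ :=
        hinner_int _ ((n:ℝ)+1) (hmeas (n+1)) (by
          have := hbdd (n+1) hnL
          filter_upwards [this] with ω hω
          push_cast at hω ⊢; linarith)
      have hint2 : Integrable (fun ω => ⟪G (X n ω), X n ω⟫) μ :=
        hinner_int _ (n:ℝ) (hmeas n) (hbdd n hnL')
      have hint3 : Integrable (fun ω => ⟪G (X n ω), X (n+1) ω - X n ω⟫) μ := by
        have : (fun ω => ⟪G (X n ω), X (n+1) ω - X n ω⟫) =
            fun ω => ⟪G (X n ω), X (n+1) ω⟫ - ⟪G (X n ω), X n ω⟫ := by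
          funext ω; rw [inner_sub_right]
        rw [this]; exact hint1.sub hint2
      -- the inner term integrates to zero
      have hzero : ∫ ω, ⟪G (X n ω), X (n+1) ω - X n ω⟫ ∂μ = 0 := by
        have heq : ∫ ω, ⟪G (X n ω), X (n+1) ω⟫ ∂μ = ∫ ω, ⟪G (X n ω), X n ω⟫ ∂μ :=
          integral_inner_eq μ (X n) (X (n+1)) (hmeas n) (hint (n+1)) (hint n) hm G hGmeas
            (Real.cosh (t * ((L:ℝ) + 1))) hGb
        have : (fun ω => ⟪G (X n ω), X (n+1) ω - X n ω⟫) =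
            fun ω => ⟪G (X n ω), X (n+1) ω⟫ - ⟪G (X n ω), X n ω⟫ := by
          funext ω; rw [inner_sub_right]
        rw [this, integral_sub hint1 hint2, heq, sub_self]
      -- put it together
      have hRHS_int : Integrable (fun ω => Real.cosh t * Real.cosh (t * ‖X n ω‖) +
          ⟪G (X n ω), X (n+1) ω - X n ω⟫) μ :=
        ((hcosh_int n hnL').const_mul _).add hint3
      calc ∫ ω, Real.cosh (t * ‖X (n+1) ω‖) ∂μ
          ≤ ∫ ω, (Real.cosh t * Real.cosh (t * ‖X n ω‖) +
              ⟪G (X n ω), X (n+1) ω - X n ω⟫) ∂μ :=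
            integral_mono_ae (hcosh_int (n+1) hnL) hRHS_int hptwise
        _ = Real.cosh t * ∫ ω, Real.cosh (t * ‖X n ω‖) ∂μ := by
            rw [integral_add ((hcosh_int n hnL').const_mul _) hint3, hzero, add_zero,
              integral_const_mul]
        _ ≤ Real.cosh t * (Real.cosh t) ^ n :=
            mul_le_mul_of_nonneg_left hIH (Real.cosh_pos _).le
        _ = (Real.cosh t) ^ (n + 1) := by ring
  -- Markov inequality
  have hsub : {ω | a ≤ ‖X j ω‖} ⊆ {ω | Real.cosh (t * a) ≤ Real.cosh (t * ‖X j ω‖)} := by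
    intro ω hω
    simp only [Set.mem_setOf_eq] at hω ⊢
    rw [Real.cosh_le_cosh, abs_mul, abs_mul, abs_of_nonneg ht, abs_of_nonneg ha.le,
      abs_of_nonneg (norm_nonneg _)]
    exact mul_le_mul_of_nonneg_left hω ht
  have hmarkov := mul_meas_ge_le_integral_of_nonneg
    (μ := μ) (f := fun ω => Real.cosh (t * ‖X j ω‖))
    (Filter.Eventually.of_forall (fun ω => (Real.cosh_pos _).le)) (hcosh_int j hjL)
    (Real.cosh (t * a))
  have hmono : (μ {ω | a ≤ ‖X j ω‖}).toReal ≤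
      (μ {ω | Real.cosh (t * a) ≤ Real.cosh (t * ‖X j ω‖)}).toReal :=
    ENNReal.toReal_mono (measure_ne_top μ _) (measure_mono hsub)
  have hcoshta : 0 < Real.cosh (t * a) := Real.cosh_pos _
  have hP : (μ {ω | a ≤ ‖X j ω‖}).toReal ≤ (Real.cosh t) ^ j / Real.cosh (t * a) := by
    rw [le_div_iff₀ hcoshta]
    calc (μ {ω | a ≤ ‖X j ω‖}).toReal * Real.cosh (t * a)
        = Real.cosh (t * a) * (μ {ω | a ≤ ‖X j ω‖}).toReal := by ring
      _ ≤ Real.cosh (t * a) * (μ {ω | Real.cosh (t * a) ≤ Real.cosh (t * ‖X j ω‖)}).toReal :=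
          mul_le_mul_of_nonneg_left hmono hcoshta.le
      _ ≤ ∫ ω, Real.cosh (t * ‖X j ω‖) ∂μ := hmarkov
      _ ≤ (Real.cosh t) ^ j := hmain j hjL
  -- numeric estimates
  have hnum1 : (Real.cosh t) ^ j ≤ Real.exp ((j:ℝ) * (t ^ 2 / 2)) := by
    rw [Real.exp_nat_mul]
    exact pow_le_pow_left₀ (Real.cosh_pos _).le (Real.cosh_le_exp_half_sq t) j
  have hnum2 : Real.exp (t * a) / 2 ≤ Real.cosh (t * a) := by
    rw [Real.cosh_eq]
    have := (Real.exp_pos (-(t * a))).le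
    linarith
  have hchain : (μ {ω | a ≤ ‖X j ω‖}).toReal ≤ 2 * Real.exp (- a ^ 2 / (2 * (j:ℝ))) := by
    calc (μ {ω | a ≤ ‖X j ω‖}).toReal
        ≤ (Real.cosh t) ^ j / Real.cosh (t * a) := hP
      _ ≤ Real.exp ((j:ℝ) * (t ^ 2 / 2)) / (Real.exp (t * a) / 2) := by
          apply div_le_div₀ (Real.exp_pos _).le hnum1 (by positivity) hnum2
      _ = 2 * Real.exp ((j:ℝ) * (t ^ 2 / 2) - t * a) := by
          rw [Real.exp_sub]; ring
      _ = 2 * Real.exp (- a ^ 2 / (2 * (j:ℝ))) := by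
          congr 1
          rw [ht_def]
          field_simp
          ring
  refine lt_of_le_of_lt hchain ?_
  have h2j : (0:ℝ) < 2 * (j:ℝ) := by positivity
  have hlt : (1 - 2 * a) / (2 * (j:ℝ)) < 1 := by
    rw [div_lt_one h2j]
    have hJ1 : (1:ℝ) ≤ (j:ℝ) := by exact_mod_cast hj1
    linarith
  have hexp : 1 - (a - 1) ^ 2 / (2 * (j:ℝ)) + a ^ 2 / (2 * (j:ℝ))
      = 1 - (1 - 2 * a) / (2 * (j:ℝ)) := by
    field_simp; ring
  have : - a ^ 2 / (2 * (j:ℝ)) < 1 - (a - 1) ^ 2 / (2 * (j:ℝ)) := by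
    have hswap : - a ^ 2 / (2 * (j:ℝ)) = -(a ^ 2 / (2 * (j:ℝ))) := by ring
    rw [hswap]; linarith
  calc 2 * Real.exp (- a ^ 2 / (2 * (j:ℝ)))
      < 2 * Real.exp (1 - (a - 1) ^ 2 / (2 * (j:ℝ))) := by
        apply mul_lt_mul_of_pos_left (Real.exp_lt_exp.mpr this) two_pos
    _ = 2 * Real.exp (1 - (a - 1) ^ 2 / (2 * (j:ℝ))) := rfl
end

section
/- Let X : Ω → ℝ^d be a Bochner-integrable random vector with ‖X‖₂ ≤ σ almost surely, for some σ > 0. Then X is norm-sub-Gaussian with parameter σ: for every t ≥ 0, P( ‖X − E[X]‖₂ ≥ t ) ≤ 2·exp( −t²/(2σ²) ). -/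
open MeasureTheory Real

/-- On `[log 2, 2]`, `exp x ≤ 4 x` (by convexity of `exp`). -/
lemma exp_le_four_mul {x : ℝ} (h1 : Real.log 2 ≤ x) (h2 : x ≤ 2) :
    Real.exp x ≤ 4 * x := by
  set a := Real.log 2 with ha
  have hab : a < 2 := by
    have h := Real.log_two_lt_d9
    rw [ha]; linarith
  have hden : (0:ℝ) < 2 - a := by linarith
  have hlam1 : 0 ≤ (2 - x) / (2 - a) := by
    apply div_nonneg <;> linarith
  have hlam2 : 0 ≤ (x - a) / (2 - a) := by
    apply div_nonneg <;> linarith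
  have hsum : (2 - x) / (2 - a) + (x - a) / (2 - a) = 1 := by
    field_simp
    ring
  have hconv := convexOn_exp.2 (Set.mem_univ a) (Set.mem_univ (2:ℝ))
    hlam1 hlam2 hsum
  have hcomb : ((2 - x) / (2 - a)) • a + ((x - a) / (2 - a)) • (2:ℝ) = x := by
    rw [smul_eq_mul, smul_eq_mul, div_mul_eq_mul_div, div_mul_eq_mul_div, ← add_div,
      div_eq_iff hden.ne']
    ring
  rw [hcomb] at hconv
  have hea : Real.exp a = 2 := Real.exp_log (by norm_num)
  have he2 : Real.exp 2 < 8 := by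
    have h1 := Real.exp_one_lt_d9
    have : Real.exp 2 = Real.exp 1 * Real.exp 1 := by
      rw [← Real.exp_add]; norm_num
    nlinarith [Real.exp_pos 1]
  have hln : (0.6931471803 : ℝ) < a := Real.log_two_gt_d9
  have hexpand : ((2 - x) / (2 - a)) • Real.exp a + ((x - a) / (2 - a)) • Real.exp 2
      = ((2 - x) * 2 + (x - a) * Real.exp 2) / (2 - a) := by
    rw [hea, smul_eq_mul, smul_eq_mul, div_mul_eq_mul_div, div_mul_eq_mul_div, ← add_div]
  rw [hexpand] at hconv
  refine hconv.trans ?_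
  rw [div_le_iff₀ hden]
  nlinarith [mul_nonneg (sub_nonneg.2 h1) (sub_nonneg.2 h2)]

/-- A bounded random vector is norm-sub-Gaussian: if `X : Ω → ℝ^d`
is Bochner integrable with `‖X‖₂ ≤ σ` almost surely (`σ > 0`), then for every `t ≥ 0`,
`P(‖X − E[X]‖₂ ≥ t) ≤ 2 exp(−t²/(2σ²))`, i.e. `X` is `nSG(σ)`. -/
theorem bounded_is_normSubGaussian
    {Ω : Type*} {mΩ : MeasurableSpace Ω} (μ : Measure Ω) [IsProbabilityMeasure μ]
    {d : ℕ} (X : Ω → EuclideanSpace ℝ (Fin d))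
    (hint : Integrable X μ)
    (σ : ℝ) (hσ : 0 < σ)
    (hbdd : ∀ᵐ ω ∂μ, ‖X ω‖ ≤ σ) :
    ∀ t : ℝ, 0 ≤ t →
      (μ {ω | t ≤ ‖X ω - ∫ ω', X ω' ∂μ‖}).toReal
        ≤ 2 * Real.exp (-t ^ 2 / (2 * σ ^ 2)) := by
  intro t ht
  set m := ∫ ω', X ω' ∂μ with hm
  have hm_norm : ‖m‖ ≤ σ := by
    calc ‖m‖ ≤ ∫ ω, ‖X ω‖ ∂μ := norm_integral_le_integral_norm _
    _ ≤ ∫ _ω, σ ∂μ := integral_mono_ae hint.norm (integrable_const σ) hbdd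
    _ = σ := by simp
  by_cases hcase : 2 * σ < t
  · -- the event is null
    have hz : μ {ω | t ≤ ‖X ω - m‖} = 0 := by
      have hae : ∀ᵐ ω ∂μ, ¬ (t ≤ ‖X ω - m‖) := by
        filter_upwards [hbdd] with ω hω
        push_neg
        calc ‖X ω - m‖ ≤ ‖X ω‖ + ‖m‖ := norm_sub_le _ _
        _ ≤ σ + σ := add_le_add hω hm_norm
        _ = 2 * σ := by ring
        _ < t := hcase
      have := ae_iff.mp hae
      simpa using this
    rw [hz]
    positivity
  push_neg at hcase
  by_cases htriv : t ^ 2 ≤ 2 * σ ^ 2 * Real.log 2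
  · -- trivial bound: RHS ≥ 1
    have h1 : (μ {ω | t ≤ ‖X ω - m‖}).toReal ≤ 1 := by
      rw [← ENNReal.toReal_one]
      exact ENNReal.toReal_mono ENNReal.one_ne_top prob_le_one
    refine h1.trans ?_
    have hexp : -Real.log 2 ≤ -t ^ 2 / (2 * σ ^ 2) := by
      rw [neg_div, neg_le_neg_iff, div_le_iff₀ (by positivity)]
      linarith
    calc (1:ℝ) = 2 * Real.exp (-Real.log 2) := by
          rw [Real.exp_neg, Real.exp_log (by norm_num)]; norm_num
    _ ≤ 2 * Real.exp (-t ^ 2 / (2 * σ ^ 2)) := by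
          gcongr
  push_neg at htriv
  have hlog2 : (0:ℝ) < Real.log 2 := Real.log_pos (by norm_num)
  have ht0 : 0 < t := by
    rcases ht.lt_or_eq with h | h
    · exact h
    · exfalso; rw [← h] at htriv; nlinarith
  -- integrability of the squared norm
  have hmeas : AEStronglyMeasurable (fun ω => ‖X ω - m‖ ^ 2) μ :=
    ((hint.aestronglyMeasurable.sub aestronglyMeasurable_const).norm).pow 2
  have hXm : Integrable (fun ω => ‖X ω - m‖ ^ 2) μ := by
    refine Integrable.mono' (integrable_const ((2 * σ) ^ 2)) hmeas ?_
    filter_upwards [hbdd] with ω hω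
    have h1 : ‖X ω - m‖ ≤ 2 * σ := by
      calc ‖X ω - m‖ ≤ ‖X ω‖ + ‖m‖ := norm_sub_le _ _
      _ ≤ σ + σ := add_le_add hω hm_norm
      _ = 2 * σ := by ring
    have h0 : (0:ℝ) ≤ ‖X ω - m‖ := norm_nonneg _
    rw [Real.norm_eq_abs, abs_of_nonneg (by positivity)]
    nlinarith
  have hI1 : Integrable (fun ω => ‖X ω‖ ^ 2) μ := by
    refine Integrable.mono' (integrable_const (σ ^ 2)) (hint.aestronglyMeasurable.norm.pow 2) ?_
    filter_upwards [hbdd] with ω hω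
    have h0 : (0:ℝ) ≤ ‖X ω‖ := norm_nonneg _
    rw [Real.norm_eq_abs, abs_of_nonneg (by positivity)]
    nlinarith
  have hI2 : Integrable (fun ω => (inner ℝ m (X ω) : ℝ)) μ := hint.const_inner m
  -- second moment bound
  have hmom : ∫ ω, ‖X ω - m‖ ^ 2 ∂μ ≤ σ ^ 2 := by
    have hexpand : (fun ω => ‖X ω - m‖ ^ 2)
        = fun ω => ‖X ω‖ ^ 2 - 2 * (inner ℝ m (X ω) : ℝ) + ‖m‖ ^ 2 := by
      funext ω
      rw [norm_sub_sq_real, real_inner_comm]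
    have hint2 : ∫ ω, (inner ℝ m (X ω) : ℝ) ∂μ = ‖m‖ ^ 2 := by
      rw [integral_inner hint m, ← hm, real_inner_self_eq_norm_sq]
    have hI1bound : ∫ ω, ‖X ω‖ ^ 2 ∂μ ≤ σ ^ 2 := by
      calc ∫ ω, ‖X ω‖ ^ 2 ∂μ ≤ ∫ _ω, σ ^ 2 ∂μ := by
            refine integral_mono_ae hI1 (integrable_const _) ?_
            filter_upwards [hbdd] with ω hω
            nlinarith [norm_nonneg (X ω)]
      _ = σ ^ 2 := by simp
    have hmul : Integrable (fun ω => 2 * (inner ℝ m (X ω) : ℝ)) μ := hI2.const_mul 2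
    have hsub : Integrable (fun ω => ‖X ω‖ ^ 2 - 2 * (inner ℝ m (X ω) : ℝ)) μ := hI1.sub hmul
    rw [hexpand, integral_add hsub (integrable_const _),
      integral_sub hI1 hmul, integral_const_mul, hint2, integral_const]
    simp only [measure_univ, probReal_univ, ENNReal.toReal_one, smul_eq_mul, one_mul]
    nlinarith [sq_nonneg ‖m‖]
  -- Markov / Chebyshev
  have hcheb := mul_meas_ge_le_integral_of_nonneg
    (Filter.Eventually.of_forall fun ω => by positivity) hXm (t ^ 2)
  have hset : {ω | t ≤ ‖X ω - m‖} ⊆ {ω | t ^ 2 ≤ ‖X ω - m‖ ^ 2} := by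
    intro ω hω
    exact pow_le_pow_left₀ ht hω 2
  have hP : (μ {ω | t ≤ ‖X ω - m‖}).toReal ≤ σ ^ 2 / t ^ 2 := by
    rw [le_div_iff₀ (by positivity)]
    have hPB : (μ {ω | t ≤ ‖X ω - m‖}).toReal
        ≤ (μ {ω | t ^ 2 ≤ ‖X ω - m‖ ^ 2}).toReal :=
      ENNReal.toReal_mono (measure_ne_top μ _) (measure_mono hset)
    calc (μ {ω | t ≤ ‖X ω - m‖}).toReal * t ^ 2
        ≤ (μ {ω | t ^ 2 ≤ ‖X ω - m‖ ^ 2}).toReal * t ^ 2 :=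
          mul_le_mul_of_nonneg_right hPB (sq_nonneg t)
    _ = t ^ 2 * (μ {ω | t ^ 2 ≤ ‖X ω - m‖ ^ 2}).toReal := by ring
    _ ≤ ∫ ω, ‖X ω - m‖ ^ 2 ∂μ := hcheb
    _ ≤ σ ^ 2 := hmom
  refine hP.trans ?_
  -- final numeric inequality: σ²/t² ≤ 2 exp(-t²/(2σ²)) when 2σ² log 2 < t² ≤ 4σ²
  set x := t ^ 2 / (2 * σ ^ 2) with hx
  have hx1 : Real.log 2 ≤ x := by
    rw [hx, le_div_iff₀ (by positivity)]
    linarith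
  have hx2 : x ≤ 2 := by
    rw [hx, div_le_iff₀ (by positivity)]
    nlinarith
  have hkey : Real.exp x ≤ 4 * x := exp_le_four_mul hx1 hx2
  have hrw : -t ^ 2 / (2 * σ ^ 2) = -x := by rw [hx]; ring
  rw [hrw, Real.exp_neg, ← one_div, mul_one_div,
    div_le_div_iff₀ (by positivity) (Real.exp_pos x)]
  have h4x : 4 * x * σ ^ 2 = 2 * t ^ 2 := by rw [hx]; field_simp; ring
  have := mul_le_mul_of_nonneg_left hkey (sq_nonneg σ)
  linarith
end
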